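/- arXiv:2410.08026 — 4 statements merged into one kernel-verified Lean document; each statement's English description precedes it below -/
import Mathlib

section
/- Let $\mathcal{H}$ be a Hilbert space and $U = \sum_{l=1}^N a_l V_l$ with $V_l \in \mathcal{H}$ and $a_l \geq 0$. Then for any positive integer $k$, there exist nonnegative integers $k_1, \dots, k_N$ with $\sum_{i=1}^N k_i = k$ such that $\| U - \frac{\|a\|_1}{k} \sum_{l=1}^N k_l V_l \|^2 \leq \frac{\|a\|_1}{k} \sum_{l=1}^N a_l \|V_l\|^2 \leq \frac{\|a\|_1^2}{k} \max_i \|V_i\|^2$, where $\|a\|_1 = \sum_{l=1}^N a_l$. -/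
open scoped RealInnerProductSpace

private lemma maurey_step {H : Type*} [NormedAddCommGroup H] [InnerProductSpace ℝ H]
    {N : ℕ} (a : Fin N → ℝ) (ha : ∀ l, 0 ≤ a l) (V : Fin N → H) (U : H)
    (hU : U = ∑ l, a l • V l) {A : ℝ} (hA : A = ∑ l, a l) (hApos : 0 < A)
    (W : H) : ∃ i, ‖W + (U - A • V i)‖ ^ 2 ≤ ‖W‖ ^ 2 + A * ∑ l, a l * ‖V l‖ ^ 2 := by
  set S := ∑ l, a l * ‖V l‖ ^ 2 with hS
  have key : ∑ i, a i * ‖W + (U - A • V i)‖ ^ 2 ≤ A * (‖W‖ ^ 2 + A * S) := by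
    have e1 : ∀ i : Fin N, a i * ‖W + (U - A • V i)‖ ^ 2
        = a i * (‖W‖ ^ 2 + 2 * ⟪W, U⟫ + ‖U‖ ^ 2)
          - 2 * A * (a i * ⟪W + U, V i⟫) + A ^ 2 * (a i * ‖V i‖ ^ 2) := by
      intro i
      have h1 : ‖W + (U - A • V i)‖ ^ 2
          = ‖W‖ ^ 2 + 2 * ⟪W, U - A • V i⟫ + ‖U - A • V i‖ ^ 2 :=
        norm_add_sq_real _ _
      have h2 : ‖U - A • V i‖ ^ 2 = ‖U‖ ^ 2 - 2 * ⟪U, A • V i⟫ + ‖A • V i‖ ^ 2 :=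
        norm_sub_sq_real _ _
      rw [h1, h2, inner_sub_right, real_inner_smul_right, real_inner_smul_right,
        norm_smul, Real.norm_eq_abs, abs_of_nonneg hApos.le, inner_add_left]
      ring
    rw [Finset.sum_congr rfl fun i _ => e1 i]
    have hsum : ∑ i : Fin N, a i * ⟪W + U, V i⟫ = ⟪W, U⟫ + ‖U‖ ^ 2 := by
      have : ∑ i : Fin N, a i * ⟪W + U, V i⟫ = ⟪W + U, ∑ i, a i • V i⟫ := by
        rw [inner_sum]
        exact Finset.sum_congr rfl fun i _ => (real_inner_smul_right _ _ _).symm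
      rw [this, ← hU, inner_add_left, real_inner_self_eq_norm_sq]
    rw [Finset.sum_add_distrib, Finset.sum_sub_distrib, ← Finset.sum_mul,
      ← Finset.mul_sum, ← Finset.mul_sum, hsum, ← hA, ← hS]
    have hU2 : 0 ≤ A * ‖U‖ ^ 2 := by positivity
    nlinarith [hU2]
  by_contra hcon
  push_neg at hcon
  have hi0 : ∃ i0 : Fin N, 0 < a i0 := by
    by_contra h
    push_neg at h
    have : A ≤ 0 := by
      rw [hA]
      exact Finset.sum_nonpos fun i _ => h i
    linarith
  obtain ⟨i0, hi0⟩ := hi0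
  have hlt : A * (‖W‖ ^ 2 + A * S) < ∑ i, a i * ‖W + (U - A • V i)‖ ^ 2 := by
    have : ∑ i : Fin N, a i * (‖W‖ ^ 2 + A * S) < ∑ i, a i * ‖W + (U - A • V i)‖ ^ 2 := by
      apply Finset.sum_lt_sum
      · intro i _
        exact mul_le_mul_of_nonneg_left (hcon i).le (ha i)
      · exact ⟨i0, Finset.mem_univ _, by
          exact (mul_lt_mul_iff_right₀ hi0).mpr (hcon i0)⟩
    calc A * (‖W‖ ^ 2 + A * S) = ∑ i : Fin N, a i * (‖W‖ ^ 2 + A * S) := by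
          rw [← Finset.sum_mul, ← hA]
      _ < _ := this
  linarith

private lemma maurey_induct {H : Type*} [NormedAddCommGroup H] [InnerProductSpace ℝ H]
    {N : ℕ} (a : Fin N → ℝ) (ha : ∀ l, 0 ≤ a l) (V : Fin N → H) (U : H)
    (hU : U = ∑ l, a l • V l) {A : ℝ} (hA : A = ∑ l, a l) (hApos : 0 < A)
    (m : ℕ) : ∃ κ : Fin N → ℕ, (∑ i, κ i = m) ∧
      ‖(m : ℝ) • U - A • ∑ l, (κ l : ℝ) • V l‖ ^ 2
        ≤ m * (A * ∑ l, a l * ‖V l‖ ^ 2) := by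
  induction m with
  | zero => exact ⟨0, by simp, by simp⟩
  | succ m ih =>
    obtain ⟨κ, hκsum, hκ⟩ := ih
    set T := ∑ l, (κ l : ℝ) • V l with hT
    obtain ⟨i, hi⟩ := maurey_step a ha V U hU hA hApos ((m : ℝ) • U - A • T)
    refine ⟨fun l => κ l + if l = i then 1 else 0, ?_, ?_⟩
    · rw [Finset.sum_add_distrib, hκsum, Finset.sum_ite_eq' Finset.univ i fun _ => 1]
      simp
    · have hTnew : ∑ l, ((κ l + if l = i then 1 else 0 : ℕ) : ℝ) • V l = T + V i := by
        push_cast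
        simp only [add_smul, ite_smul, one_smul, zero_smul, Finset.sum_add_distrib,
          Finset.sum_ite_eq', Finset.mem_univ, if_true, apply_ite (Nat.cast : ℕ → ℝ),
          Nat.cast_one, Nat.cast_zero]
        rfl
      rw [hTnew]
      have harr : ((m : ℝ) + 1) • U - A • (T + V i)
          = ((m : ℝ) • U - A • T) + (U - A • V i) := by
        rw [add_smul, smul_add, one_smul]; abel
      push_cast
      rw [harr]
      calc ‖((m : ℝ) • U - A • T) + (U - A • V i)‖ ^ 2
          ≤ ‖(m : ℝ) • U - A • T‖ ^ 2 + A * ∑ l, a l * ‖V l‖ ^ 2 := hi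
        _ ≤ m * (A * ∑ l, a l * ‖V l‖ ^ 2) + A * ∑ l, a l * ‖V l‖ ^ 2 := by linarith
        _ = (m + 1) * (A * ∑ l, a l * ‖V l‖ ^ 2) := by ring

/-- **Maurey's sparsification lemma.** -/
theorem maurey_sparsification {H : Type*} [NormedAddCommGroup H] [InnerProductSpace ℝ H]
    (N : ℕ) (hN : 0 < N) (a : Fin N → ℝ) (ha : ∀ l, 0 ≤ a l) (V : Fin N → H)
    (U : H) (hU : U = ∑ l, a l • V l) (k : ℕ) (hk : 0 < k) :
    ∃ κ : Fin N → ℕ, (∑ i, κ i = k) ∧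
      ‖U - ((∑ l, a l) / k) • ∑ l, (κ l : ℝ) • V l‖ ^ 2
        ≤ ((∑ l, a l) / k) * ∑ l, a l * ‖V l‖ ^ 2 ∧
      ((∑ l, a l) / k) * ∑ l, a l * ‖V l‖ ^ 2
        ≤ ((∑ l, a l) ^ 2 / k) * ⨆ i, ‖V i‖ ^ 2 := by
  set A := ∑ l, a l with hA
  have hA0 : 0 ≤ A := Finset.sum_nonneg fun l _ => ha l
  have hk0 : (0 : ℝ) < k := by exact_mod_cast hk
  -- second inequality, independent of κ
  have h2 : (A / k) * ∑ l, a l * ‖V l‖ ^ 2 ≤ (A ^ 2 / k) * ⨆ i, ‖V i‖ ^ 2 := by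
    have hsup : ∀ l, ‖V l‖ ^ 2 ≤ ⨆ i, ‖V i‖ ^ 2 := fun l =>
      le_ciSup (f := fun i => ‖V i‖ ^ 2) (Set.Finite.bddAbove (Set.finite_range _)) l
    have hs : ∑ l, a l * ‖V l‖ ^ 2 ≤ A * ⨆ i, ‖V i‖ ^ 2 := by
      calc ∑ l, a l * ‖V l‖ ^ 2 ≤ ∑ l, a l * ⨆ i, ‖V i‖ ^ 2 :=
            Finset.sum_le_sum fun l _ => mul_le_mul_of_nonneg_left (hsup l) (ha l)
        _ = A * ⨆ i, ‖V i‖ ^ 2 := by rw [← Finset.sum_mul]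
    have hAk : 0 ≤ A / k := div_nonneg hA0 hk0.le
    calc (A / k) * ∑ l, a l * ‖V l‖ ^ 2 ≤ (A / k) * (A * ⨆ i, ‖V i‖ ^ 2) :=
          mul_le_mul_of_nonneg_left hs hAk
      _ = (A ^ 2 / k) * ⨆ i, ‖V i‖ ^ 2 := by ring
  rcases eq_or_lt_of_le hA0 with hA00 | hApos
  · -- A = 0 forces all a l = 0, U = 0
    have hall : ∀ l ∈ Finset.univ, a l = 0 :=
      (Finset.sum_eq_zero_iff_of_nonneg fun l _ => ha l).mp hA00.symm
    have hU0 : U = 0 := by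
      rw [hU]
      exact Finset.sum_eq_zero fun l hl => by rw [hall l hl, zero_smul]
    refine ⟨fun l => if l = ⟨0, hN⟩ then k else 0, ?_, ?_, h2⟩
    · rw [Finset.sum_ite_eq' Finset.univ _ fun _ => k]; simp
    · rw [hU0, ← hA00]
      simp
  · obtain ⟨κ, hκsum, hκ⟩ := maurey_induct a ha V U hU hA hApos k
    refine ⟨κ, hκsum, ?_, h2⟩
    have heq : U - (A / k) • ∑ l, (κ l : ℝ) • V l
        = (k : ℝ)⁻¹ • ((k : ℝ) • U - A • ∑ l, (κ l : ℝ) • V l) := by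
      rw [smul_sub, inv_smul_smul₀ hk0.ne', smul_smul]
      rw [div_eq_inv_mul]
    rw [heq, norm_smul, mul_pow, Real.norm_eq_abs, abs_of_nonneg (by positivity)]
    calc ((k : ℝ)⁻¹) ^ 2 * ‖(k : ℝ) • U - A • ∑ l, (κ l : ℝ) • V l‖ ^ 2
        ≤ ((k : ℝ)⁻¹) ^ 2 * (k * (A * ∑ l, a l * ‖V l‖ ^ 2)) := by
          apply mul_le_mul_of_nonneg_left hκ (by positivity)
      _ = (A / k) * ∑ l, a l * ‖V l‖ ^ 2 := by
          field_simp
end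

section
/- Let $\mathcal{F}_1, \dots, \mathcal{F}_L$ be classes of maps, where each $\Psi \in \mathcal{F}_i$ maps $\mathbb{R}^{n \times d_{i-1}} \to \mathbb{R}^{n \times d_i}$ and is $\rho_i$-Lipschitz with respect to norms $|\cdot|_{i-1}$ and $|\cdot|_i$: $|\Psi(X) - \Psi(X')|_i \leq \rho_i |X - X'|_{i-1}$. Let $\mathcal{H}_L(X) = \{\Psi_L \circ \cdots \circ \Psi_1(X) : \Psi_l \in \mathcal{F}_l\}$ for a fixed input $X$. Given $\epsilon_1, \dots, \epsilon_L > 0$, define $s_L = \sum_{i=1}^L (\prod_{j=i+1}^L \rho_j) \epsilon_i$. Then the proper covering number satisfies $\mathcal{N}(\mathcal{H}_L(X), s_L, |\cdot|_L) \leq \prod_{i=0}^{L-1} \sup_{\Psi_1, \dots, \Psi_i} \mathcal{N}(\{\Psi \circ \Psi_i \circ \cdots \circ \Psi_1(X) : \Psi \in \mathcal{F}_{i+1}\}, \epsilon_{i+1}, |\cdot|_{i+1})$. -/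
open Finset

/-- Proper covering number of a set `U` at scale `ε`, with respect to the norm of
the ambient (semi)normed group: the least cardinality of a subset `V ⊆ U` such that
every `u ∈ U` is within distance `ε` of some `v ∈ V`. -/
noncomputable def properCoverNum {α : Type*} [SeminormedAddCommGroup α]
    (U : Set α) (ε : ℝ) : ℕ∞ :=
  ⨅ (V : Finset α) (_ : ↑V ⊆ U) (_ : ∀ u ∈ U, ∃ v ∈ V, ‖v - u‖ ≤ ε), (V.card : ℕ∞)

/-- Composition of the first `k` layer maps. -/
def comps {E : ℕ → Type*} (Ψ : ∀ i, E i → E (i + 1)) : ∀ k, E 0 → E k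
  | 0, x => x
  | (k + 1), x => Ψ k (comps Ψ k x)

lemma properCoverNum_le_card {α : Type*} [SeminormedAddCommGroup α] {U : Set α} {ε : ℝ}
    {V : Finset α} (hV : ↑V ⊆ U) (hcov : ∀ u ∈ U, ∃ v ∈ V, ‖v - u‖ ≤ ε) :
    properCoverNum U ε ≤ V.card :=
  iInf_le_of_le V (iInf_le_of_le hV (iInf_le_of_le hcov le_rfl))

lemma exists_cover_of_le {α : Type*} [SeminormedAddCommGroup α] {U : Set α} {ε : ℝ} {n : ℕ}
    (h : properCoverNum U ε ≤ (n : ℕ∞)) :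
    ∃ V : Finset α, ↑V ⊆ U ∧ (∀ u ∈ U, ∃ v ∈ V, ‖v - u‖ ≤ ε) ∧ V.card ≤ n := by
  by_contra hc
  push_neg at hc
  have h2 : ((n + 1 : ℕ) : ℕ∞) ≤ properCoverNum U ε := by
    refine le_iInf fun V => le_iInf fun hV => le_iInf fun hcov => ?_
    exact_mod_cast Nat.succ_le_of_lt (hc V hV hcov)
  have h3 := h2.trans h
  exact absurd (by exact_mod_cast h3) (by omega)

lemma one_le_properCoverNum {α : Type*} [SeminormedAddCommGroup α] {U : Set α} {ε : ℝ}
    (hU : U.Nonempty) : 1 ≤ properCoverNum U ε := by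
  refine le_iInf fun V => le_iInf fun hV => le_iInf fun hcov => ?_
  obtain ⟨u, hu⟩ := hU
  obtain ⟨v, hv, -⟩ := hcov u hu
  exact_mod_cast card_pos.mpr ⟨v, hv⟩

lemma comps_congr {E : ℕ → Type*} {Ψ Ψ' : ∀ i, E i → E (i + 1)} {k : ℕ}
    (h : ∀ i < k, Ψ i = Ψ' i) (x : E 0) : comps Ψ k x = comps Ψ' k x := by
  induction k with
  | zero => rfl
  | succ k ih =>
      show Ψ k (comps Ψ k x) = Ψ' k (comps Ψ' k x)
      rw [ih (fun i hi => h i (Nat.lt_succ_of_lt hi)), h k (Nat.lt_succ_self k)]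

/-- The supremum over admissible prefixes of the layer-`i` covering number. -/
noncomputable def layerN (E : ℕ → Type*) [∀ i, SeminormedAddCommGroup (E i)]
    (F : ∀ i : ℕ, Set (E i → E (i + 1))) (ε : ℕ → ℝ) (X : E 0) (i : ℕ) : ℕ∞ :=
  ⨆ (Ψ : ∀ j, E j → E (j + 1)) (_ : ∀ j < i, Ψ j ∈ F j),
    properCoverNum ((fun g => g (comps Ψ i X)) '' F i) (ε i)

lemma term_le_layerN (E : ℕ → Type*) [∀ i, SeminormedAddCommGroup (E i)]
    (F : ∀ i : ℕ, Set (E i → E (i + 1))) (ε : ℕ → ℝ) (X : E 0) (i : ℕ)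
    (Ψ : ∀ j, E j → E (j + 1)) (hΨ : ∀ j < i, Ψ j ∈ F j) :
    properCoverNum ((fun g => g (comps Ψ i X)) '' F i) (ε i) ≤ layerN E F ε X i :=
  le_iSup_of_le Ψ (le_iSup_of_le hΨ le_rfl)

lemma one_le_layerN (E : ℕ → Type*) [∀ i, SeminormedAddCommGroup (E i)]
    (F : ∀ i : ℕ, Set (E i → E (i + 1))) (ε : ℕ → ℝ) (X : E 0)
    (hne : ∀ i, (F i).Nonempty) (i : ℕ) : 1 ≤ layerN E F ε X i := by
  classical
  have hg : ∀ j, (fun j => (hne j).choose) j ∈ F j := fun j => (hne j).choose_spec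
  refine le_trans ?_ (term_le_layerN E F ε X i _ (fun j _ => hg j))
  exact one_le_properCoverNum ⟨_, Set.mem_image_of_mem
    (fun g => g (comps (fun j => (hne j).choose) i X)) (hg i)⟩

set_option maxHeartbeats 1000000 in
lemma key_lemma (E : ℕ → Type*) [∀ i, SeminormedAddCommGroup (E i)]
    (F : ∀ i : ℕ, Set (E i → E (i + 1))) (ρ ε : ℕ → ℝ)
    (hρ : ∀ i, 0 < ρ i)
    (hLip : ∀ i, ∀ Ψ ∈ F i, ∀ X X' : E i, ‖Ψ X - Ψ X'‖ ≤ ρ i * ‖X - X'‖)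
    (X : E 0) (hne : ∀ i, (F i).Nonempty) (k : ℕ) :
    properCoverNum
        {y : E k | ∃ Ψ : ∀ i, E i → E (i + 1), (∀ i < k, Ψ i ∈ F i) ∧ y = comps Ψ k X}
        (∑ i ∈ Finset.range k, (∏ j ∈ Finset.Ico (i + 1) k, ρ j) * ε i)
      ≤ ∏ i ∈ Finset.range k, layerN E F ε X i := by
  classical
  induction k with
  | zero =>
      have hsub : ↑({X} : Finset (E 0)) ⊆
          {y : E 0 | ∃ Ψ : ∀ i, E i → E (i + 1), (∀ i < 0, Ψ i ∈ F i) ∧ y = comps Ψ 0 X} := by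
        intro y hy
        simp only [coe_singleton, Set.mem_singleton_iff] at hy
        exact ⟨fun j => (hne j).choose, fun i hi => absurd hi (Nat.not_lt_zero i), hy⟩
      have hcov : ∀ u ∈ {y : E 0 | ∃ Ψ : ∀ i, E i → E (i + 1),
          (∀ i < 0, Ψ i ∈ F i) ∧ y = comps Ψ 0 X},
          ∃ v ∈ ({X} : Finset (E 0)), ‖v - u‖ ≤
            ∑ i ∈ Finset.range 0, (∏ j ∈ Finset.Ico (i + 1) 0, ρ j) * ε i := by
        rintro u ⟨Ψ, -, hu⟩
        refine ⟨X, mem_singleton_self X, ?_⟩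
        have huX : u = X := hu
        rw [huX]
        simp
      calc properCoverNum _ _ ≤ (({X} : Finset (E 0)).card : ℕ∞) :=
            properCoverNum_le_card hsub hcov
        _ ≤ _ := by simp
  | succ k ih =>
      rw [prod_range_succ]
      have hN1 := one_le_layerN E F ε X hne
      by_cases hPtop : (∏ i ∈ range k, layerN E F ε X i) = ⊤
      · rw [hPtop, ENat.top_mul (by intro h0; exact absurd (h0 ▸ hN1 k) (by simp))]
        exact le_top
      by_cases hNtop : layerN E F ε X k = ⊤
      · have hP0 : (∏ i ∈ range k, layerN E F ε X i) ≠ 0 := by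
          rw [Finset.prod_ne_zero_iff]
          intro i _ h0
          exact absurd (h0 ▸ hN1 i) (by simp)
        rw [hNtop, ENat.mul_top hP0]
        exact le_top
      obtain ⟨a, ha⟩ : ∃ a : ℕ, (a : ℕ∞) = ∏ i ∈ range k, layerN E F ε X i :=
        ⟨_, ENat.coe_toNat hPtop⟩
      obtain ⟨b, hb⟩ : ∃ b : ℕ, (b : ℕ∞) = layerN E F ε X k := ⟨_, ENat.coe_toNat hNtop⟩
      obtain ⟨V, hVsub, hVcov, hVcard⟩ := exists_cover_of_le (ih.trans ha.ge)
      -- for each center v, choose a cover of the one-layer image at v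
      have hQ : ∀ v ∈ V, ∃ W : Finset (E (k + 1)),
          ↑W ⊆ (fun f => f v) '' F k ∧
          (∀ u ∈ (fun f => f v) '' F k, ∃ w ∈ W, ‖w - u‖ ≤ ε k) ∧ W.card ≤ b := by
        intro v hv
        obtain ⟨Ψv, hΨv, hveq⟩ := hVsub hv
        have hterm : properCoverNum ((fun f => f v) '' F k) (ε k) ≤ (b : ℕ∞) := by
          rw [hveq]
          exact (term_le_layerN E F ε X k Ψv hΨv).trans hb.ge
        exact exists_cover_of_le hterm
      choose! W hWsub hWcov hWcard using hQ
      have hsub : ↑(V.biUnion W) ⊆ {y : E (k + 1) | ∃ Ψ : ∀ i, E i → E (i + 1),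
          (∀ i < k + 1, Ψ i ∈ F i) ∧ y = comps Ψ (k + 1) X} := by
        intro w hw
        rw [coe_biUnion] at hw
        simp only [Set.mem_iUnion] at hw
        obtain ⟨v, hv, hwv⟩ := hw
        obtain ⟨Ψv, hΨv, hveq⟩ := hVsub hv
        obtain ⟨Ψ', hΨ', hw'⟩ := hWsub v hv hwv
        refine ⟨Function.update Ψv k Ψ', ?_, ?_⟩
        · intro i hi
          rcases Nat.lt_succ_iff_lt_or_eq.mp hi with hi' | rfl
          · rw [Function.update_of_ne (Nat.ne_of_lt hi')]
            exact hΨv i hi'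
          · rw [Function.update_self]
            exact hΨ'
        · show w = Function.update Ψv k Ψ' k (comps (Function.update Ψv k Ψ') k X)
          rw [Function.update_self,
            comps_congr (fun i hi => Function.update_of_ne (Nat.ne_of_lt hi) _ _) X,
            ← hveq]
          exact hw'.symm
      have hcov : ∀ u ∈ {y : E (k + 1) | ∃ Ψ : ∀ i, E i → E (i + 1),
          (∀ i < k + 1, Ψ i ∈ F i) ∧ y = comps Ψ (k + 1) X},
          ∃ w ∈ V.biUnion W, ‖w - u‖ ≤
            ∑ i ∈ Finset.range (k + 1), (∏ j ∈ Finset.Ico (i + 1) (k + 1), ρ j) * ε i := by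
        rintro u ⟨Ψ, hΨ, rfl⟩
        have hcomp : comps Ψ (k + 1) X = Ψ k (comps Ψ k X) := rfl
        have hu : comps Ψ k X ∈ {y : E k | ∃ Ψ : ∀ i, E i → E (i + 1),
            (∀ i < k, Ψ i ∈ F i) ∧ y = comps Ψ k X} :=
          ⟨Ψ, fun i hi => hΨ i (Nat.lt_succ_of_lt hi), rfl⟩
        obtain ⟨v, hv, hvd⟩ := hVcov _ hu
        have hΨk : Ψ k ∈ F k := hΨ k (Nat.lt_succ_self k)
        obtain ⟨w, hw, hwd⟩ := hWcov v hv (Ψ k v) (Set.mem_image_of_mem _ hΨk)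
        refine ⟨w, mem_biUnion.mpr ⟨v, hv, hw⟩, ?_⟩
        have hsum : ∑ i ∈ Finset.range (k + 1), (∏ j ∈ Finset.Ico (i + 1) (k + 1), ρ j) * ε i
            = ρ k * (∑ i ∈ Finset.range k, (∏ j ∈ Finset.Ico (i + 1) k, ρ j) * ε i) + ε k := by
          rw [Finset.sum_range_succ, Finset.Ico_self, Finset.prod_empty, one_mul,
            Finset.mul_sum]
          congr 1
          refine Finset.sum_congr rfl fun i hi => ?_
          rw [Finset.prod_Ico_succ_top (Nat.succ_le_of_lt (Finset.mem_range.mp hi))]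
          ring
        rw [hcomp, hsum]
        calc ‖w - Ψ k (comps Ψ k X)‖
            = ‖(w - Ψ k v) + (Ψ k v - Ψ k (comps Ψ k X))‖ := by rw [sub_add_sub_cancel]
          _ ≤ ‖w - Ψ k v‖ + ‖Ψ k v - Ψ k (comps Ψ k X)‖ := norm_add_le _ _
          _ ≤ ε k + ρ k * ‖v - comps Ψ k X‖ := by
              gcongr
              exact hLip k (Ψ k) hΨk v (comps Ψ k X)
          _ ≤ ε k + ρ k * (∑ i ∈ Finset.range k, (∏ j ∈ Finset.Ico (i + 1) k, ρ j) * ε i) := by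
              gcongr
              exact (hρ k).le
          _ = _ := by ring
      calc properCoverNum _ _ ≤ ((V.biUnion W).card : ℕ∞) := properCoverNum_le_card hsub hcov
        _ ≤ ((a * b : ℕ) : ℕ∞) := by
            have h1 : (V.biUnion W).card ≤ a * b := by
              calc (V.biUnion W).card ≤ ∑ v ∈ V, (W v).card := Finset.card_biUnion_le
                _ ≤ ∑ _v ∈ V, b := Finset.sum_le_sum fun v hv => hWcard v hv
                _ = V.card * b := by rw [Finset.sum_const, smul_eq_mul]
                _ ≤ a * b := Nat.mul_le_mul_right b hVcard
            exact_mod_cast h1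
        _ = (∏ i ∈ range k, layerN E F ε X i) * layerN E F ε X k := by
            rw [Nat.cast_mul, ha, hb]

/-- **Layer-by-layer covering bound (Proposition 1).** Layers are indexed by
`i = 0, …, L-1`, so that layer `i` here corresponds to layer `i+1` of the paper;
`E i` is `ℝ^{n × d_i}` equipped with the norm `|·|_i`. -/
theorem coverNum_composition_le (L : ℕ) (hL : 0 < L)
    (E : ℕ → Type*) [∀ i, SeminormedAddCommGroup (E i)]
    (F : ∀ i : ℕ, Set (E i → E (i + 1))) (ρ ε : ℕ → ℝ)
    (hρ : ∀ i, 0 < ρ i) (hε : ∀ i, 0 < ε i)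
    (hLip : ∀ i, ∀ Ψ ∈ F i, ∀ X X' : E i, ‖Ψ X - Ψ X'‖ ≤ ρ i * ‖X - X'‖)
    (X : E 0) :
    properCoverNum
        {y : E L | ∃ Ψ : ∀ i, E i → E (i + 1), (∀ i, Ψ i ∈ F i) ∧ y = comps Ψ L X}
        (∑ i ∈ Finset.range L, (∏ j ∈ Finset.Ico (i + 1) L, ρ j) * ε i)
      ≤ ∏ i ∈ Finset.range L,
          ⨆ (Ψ : ∀ j, E j → E (j + 1)) (_ : ∀ j < i, Ψ j ∈ F j),
            properCoverNum ((fun g => g (comps Ψ i X)) '' F i) (ε i) := by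
  classical
  show properCoverNum _ _ ≤ ∏ i ∈ Finset.range L, layerN E F ε X i
  by_cases hne : ∀ i, (F i).Nonempty
  · have hset : {y : E L | ∃ Ψ : ∀ i, E i → E (i + 1), (∀ i, Ψ i ∈ F i) ∧ y = comps Ψ L X}
        = {y : E L | ∃ Ψ : ∀ i, E i → E (i + 1), (∀ i < L, Ψ i ∈ F i) ∧ y = comps Ψ L X} := by
      ext y
      constructor
      · rintro ⟨Ψ, hΨ, rfl⟩
        exact ⟨Ψ, fun i _ => hΨ i, rfl⟩
      · rintro ⟨Ψ, hΨ, rfl⟩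
        refine ⟨fun i => if h : i < L then Ψ i else (hne i).choose, fun i => ?_, ?_⟩
        · by_cases h : i < L
          · simpa only [dif_pos h] using hΨ i h
          · simpa only [dif_neg h] using (hne i).choose_spec
        · exact (comps_congr (fun i hi => by simp [dif_pos hi]) X).symm
    rw [hset]
    exact key_lemma E F ρ ε hρ hLip X hne L
  · push_neg at hne
    obtain ⟨i, hi⟩ := hne
    have hempty : {y : E L | ∃ Ψ : ∀ i, E i → E (i + 1), (∀ i, Ψ i ∈ F i) ∧ y = comps Ψ L X}
        = ∅ := by
      ext y
      simp only [Set.mem_setOf_eq, Set.mem_empty_iff_false, iff_false, not_exists]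
      rintro Ψ ⟨hΨ, -⟩
      exact absurd (hΨ i) (by simp [hi])
    rw [hempty]
    calc properCoverNum (∅ : Set (E L)) _ ≤ ((∅ : Finset (E L)).card : ℕ∞) :=
          properCoverNum_le_card (by simp) (by simp)
      _ = 0 := by simp
      _ ≤ _ := zero_le
end

section
/- Let $\Psi(x) = (\psi_1(x), \dots, \psi_m(x))$ with $\psi_i(x) = \sum_{j=1}^p \beta_{ij} g_{ij}(x)$, where $g_{ij}: \mathbb{R}^d \to \mathbb{R}$ are fixed basis functions and $B = (\beta_{ij}) \in \mathbb{R}^{m \times p}$. Fix data points $x_1, \dots, x_n \in \mathbb{R}^d$. Suppose $\|B\|_r \leq b$ and $\|G(X)\|_{v,s} \leq c$ where $1/r + 1/s = 1$, $r,s > 0$, $0 < v \leq 2$, $\|B\|_r = (\sum_{i,j} |\beta_{ij}|^r)^{1/r}$ and $\|G(X)\|_{v,s} = \{\sum_{i,j} (\sum_{k=1}^n |g_{ij}(x_k)|^v)^{s/v}\}^{1/s}$. Then the class $\{\Psi(X) \in \mathbb{R}^{n \times m} : \Psi \text{ as above}\}$, where $\Psi(X)$ is the matrix with rows $\Psi(x_k)$,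 satisfies $\log \mathcal{N}(\{\Psi(X)\}, \epsilon, \|\cdot\|_F) \leq \frac{b^2 c^2}{\epsilon^2} \log(2mp)$ for any $\epsilon > 0$. -/
open Finset
open scoped RealInnerProductSpace

set_option linter.unusedSectionVars false
set_option maxHeartbeats 1000000

section AuxMaurey
variable {F : Type*} [NormedAddCommGroup F] [InnerProductSpace ℝ F]

private lemma exists_le_weighted {I : Type*} [Fintype I] {w v : I → ℝ} (hw : ∀ i, 0 ≤ w i)
    (hw1 : ∑ i, w i = 1) {B : ℝ} (hB : ∑ i, w i * v i ≤ B) : ∃ i, v i ≤ B := by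
  by_contra h
  push_neg at h
  obtain ⟨i0, hi0⟩ : ∃ i, 0 < w i := by
    by_contra hq; push_neg at hq
    have h0 : ∑ i, w i = 0 :=
      le_antisymm (Finset.sum_nonpos fun i _ => hq i) (Finset.sum_nonneg fun i _ => hw i)
    rw [hw1] at h0; exact one_ne_zero h0
  have hlt : ∑ i, w i * B < ∑ i, w i * v i :=
    Finset.sum_lt_sum (fun i _ => mul_le_mul_of_nonneg_left (h i).le (hw i))
      ⟨i0, Finset.mem_univ _, mul_lt_mul_of_pos_left (h i0) hi0⟩
  rw [← Finset.sum_mul, hw1, one_mul] at hlt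
  linarith



private lemma pi_succ_sum {I : Type*} [Fintype I] {M : Type*} [AddCommMonoid M] (k : ℕ)
    (G : (Fin (k+1) → I) → M) :
    ∑ f : Fin (k+1) → I, G f = ∑ i : I, ∑ f : Fin k → I, G (Fin.cons i f) := by
  rw [← Equiv.sum_comp (Fin.consEquiv fun _ => I) G, Fintype.sum_prod_type]
  rfl

private lemma cons_prod {I : Type*} [Fintype I] (q : I → ℝ) (k : ℕ) (i : I) (f : Fin k → I) :
    ∏ t, q ((Fin.cons i f : Fin (k+1) → I) t) = q i * ∏ t, q (f t) := by
  rw [Fin.prod_univ_succ]; simp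

private lemma cons_sum_vec {I : Type*} [Fintype I] (z : I → F) (k : ℕ) (i : I) (f : Fin k → I) :
    ∑ t, z ((Fin.cons i f : Fin (k+1) → I) t) = z i + ∑ t, z (f t) := by
  rw [Fin.sum_univ_succ]; simp

private lemma moment0 {I : Type*} [Fintype I] (q : I → ℝ) (hq1 : ∑ i, q i = 1) :
    ∀ k : ℕ, ∑ f : Fin k → I, ∏ t, q (f t) = 1 := by
  intro k
  induction k with
  | zero => simp
  | succ k ih =>
    rw [pi_succ_sum]
    simp_rw [cons_prod q k, ← Finset.mul_sum, ih, mul_one, hq1]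

private lemma moment1 {I : Type*} [Fintype I] (q : I → ℝ) (z : I → F)
    (hq1 : ∑ i, q i = 1) {A : F} (hA : ∑ i, q i • z i = A) :
    ∀ k : ℕ, ∑ f : Fin k → I, (∏ t, q (f t)) • (∑ t, z (f t)) = (k : ℝ) • A := by
  intro k
  induction k with
  | zero => simp
  | succ k ih =>
    rw [pi_succ_sum]
    have key : ∀ i : I, ∑ f : Fin k → I,
        (∏ t, q ((Fin.cons i f : Fin (k+1) → I) t)) • (∑ t, z ((Fin.cons i f : Fin (k+1) → I) t))
        = q i • z i + q i • ((k : ℝ) • A) := by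
      intro i
      simp_rw [cons_prod q k, cons_sum_vec z k, smul_add, Finset.sum_add_distrib]
      congr 1
      · rw [← Finset.sum_smul, ← Finset.mul_sum, moment0 q hq1 k, mul_one]
      · simp_rw [mul_smul]
        rw [← Finset.smul_sum, ih]
    simp_rw [key, Finset.sum_add_distrib, hA, ← Finset.sum_smul, hq1, one_smul]
    push_cast
    rw [add_smul, one_smul, add_comm]

private lemma moment2 {I : Type*} [Fintype I] (q : I → ℝ) (z : I → F)
    (hq1 : ∑ i, q i = 1) {A : F} (hA : ∑ i, q i • z i = A) :
    ∀ k : ℕ, ∑ f : Fin k → I, (∏ t, q (f t)) * ‖∑ t, z (f t)‖ ^ 2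
      = (k : ℝ) * (∑ i, q i * ‖z i‖ ^ 2) + (k : ℝ) * ((k : ℝ) - 1) * ‖A‖ ^ 2 := by
  intro k
  induction k with
  | zero => simp
  | succ k ih =>
    rw [pi_succ_sum]
    have key : ∀ i : I, ∑ f : Fin k → I,
        (∏ t, q ((Fin.cons i f : Fin (k+1) → I) t)) * ‖∑ t, z ((Fin.cons i f : Fin (k+1) → I) t)‖ ^ 2
        = q i * ‖z i‖ ^ 2 + 2 * (q i * ⟪z i, (k : ℝ) • A⟫)
          + q i * ((k : ℝ) * (∑ i, q i * ‖z i‖ ^ 2) + (k : ℝ) * ((k : ℝ) - 1) * ‖A‖ ^ 2) := by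
      intro i
      simp_rw [cons_prod q k, cons_sum_vec z k, norm_add_sq_real]
      have expand : ∀ f : Fin k → I, (q i * ∏ t, q (f t)) *
          (‖z i‖ ^ 2 + 2 * ⟪z i, ∑ t, z (f t)⟫ + ‖∑ t, z (f t)‖ ^ 2)
          = q i * ((∏ t, q (f t)) * ‖z i‖ ^ 2) + 2 * (q i * ((∏ t, q (f t)) * ⟪z i, ∑ t, z (f t)⟫))
            + q i * ((∏ t, q (f t)) * ‖∑ t, z (f t)‖ ^ 2) := by
        intro f; ring
      simp_rw [expand, Finset.sum_add_distrib]
      have e1 : ∑ f : Fin k → I, q i * ((∏ t, q (f t)) * ‖z i‖ ^ 2) = q i * ‖z i‖ ^ 2 := by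
        rw [← Finset.mul_sum, ← Finset.sum_mul, moment0 q hq1 k, one_mul]
      have e2 : ∑ f : Fin k → I, 2 * (q i * ((∏ t, q (f t)) * ⟪z i, ∑ t, z (f t)⟫))
          = 2 * (q i * ⟪z i, (k : ℝ) • A⟫) := by
        rw [← Finset.mul_sum, ← Finset.mul_sum]
        congr 2
        rw [← moment1 q z hq1 hA k, inner_sum]
        exact Finset.sum_congr rfl fun f _ => (real_inner_smul_right _ _ _).symm
      have e3 : ∑ f : Fin k → I, q i * ((∏ t, q (f t)) * ‖∑ t, z (f t)‖ ^ 2)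
          = q i * ((k : ℝ) * (∑ j, q j * ‖z j‖ ^ 2) + (k : ℝ) * ((k : ℝ) - 1) * ‖A‖ ^ 2) := by
        rw [← Finset.mul_sum, ih]
      rw [e1, e2, e3]
    simp_rw [key, Finset.sum_add_distrib]
    rw [← Finset.mul_sum, ← Finset.sum_mul, hq1, one_mul]
    have h2 : ∑ i, q i * ⟪z i, (k : ℝ) • A⟫ = (k : ℝ) * ‖A‖ ^ 2 := by
      have h3 : ∑ i, q i * ⟪z i, (k : ℝ) • A⟫ = ⟪A, (k : ℝ) • A⟫ := by
        rw [← hA, sum_inner]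
        exact Finset.sum_congr rfl fun i _ => (real_inner_smul_left _ _ _).symm
      rw [h3, real_inner_smul_right, real_inner_self_eq_norm_sq]
    rw [h2]
    push_cast
    ring

private lemma maurey {I : Type*} [Fintype I] (q : I → ℝ) (z : I → F)
    (hq0 : ∀ i, 0 ≤ q i) (hq1 : ∑ i, q i = 1) {a : ℝ}
    (hz : ∀ i, ‖z i‖ ^ 2 ≤ a ^ 2) {A : F} (hA : ∑ i, q i • z i = A)
    (k : ℕ) (hk : 0 < k) (σ : ℝ) :
    ∃ f : Fin k → I, ‖A - (σ / k) • ∑ t, z (f t)‖ ^ 2 ≤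
      (1 - σ) ^ 2 * ‖A‖ ^ 2 + σ ^ 2 / k * (a ^ 2 - ‖A‖ ^ 2) := by
  have hkR : (0:ℝ) < (k : ℝ) := by exact_mod_cast hk
  set M : ℝ := ∑ i, q i * ‖z i‖ ^ 2 with hM
  have hMa : M ≤ a ^ 2 := by
    calc M ≤ ∑ i, q i * a ^ 2 :=
          Finset.sum_le_sum fun i _ => mul_le_mul_of_nonneg_left (hz i) (hq0 i)
    _ = a ^ 2 := by rw [← Finset.sum_mul, hq1, one_mul]
  have hval : ∀ f : Fin k → I, ‖A - (σ / k) • ∑ t, z (f t)‖ ^ 2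
      = ‖A‖ ^ 2 - 2 * (σ / k) * ⟪A, ∑ t, z (f t)⟫ + (σ / k) ^ 2 * ‖∑ t, z (f t)‖ ^ 2 := by
    intro f
    rw [norm_sub_sq_real, real_inner_smul_right, norm_smul]
    simp only [Real.norm_eq_abs, mul_pow, sq_abs]
    ring
  have hsum : ∑ f : Fin k → I, (∏ t, q (f t)) * ‖A - (σ / k) • ∑ t, z (f t)‖ ^ 2
      = (1 - σ) ^ 2 * ‖A‖ ^ 2 + σ ^ 2 / k * (M - ‖A‖ ^ 2) := by
    simp_rw [hval, mul_add, mul_sub, Finset.sum_add_distrib, Finset.sum_sub_distrib]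
    have e1 : ∑ f : Fin k → I, (∏ t, q (f t)) * ‖A‖ ^ 2 = ‖A‖ ^ 2 := by
      rw [← Finset.sum_mul, moment0 q hq1 k, one_mul]
    have e2 : ∑ f : Fin k → I, (∏ t, q (f t)) * (2 * (σ / k) * ⟪A, ∑ t, z (f t)⟫)
        = 2 * (σ / k) * ((k : ℝ) * ‖A‖ ^ 2) := by
      have h3 : ∑ f : Fin k → I, (∏ t, q (f t)) * ⟪A, ∑ t, z (f t)⟫
          = (k : ℝ) * ‖A‖ ^ 2 := by
        have h4 : ∑ f : Fin k → I, (∏ t, q (f t)) * ⟪A, ∑ t, z (f t)⟫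
            = ⟪A, ∑ f : Fin k → I, (∏ t, q (f t)) • ∑ t, z (f t)⟫ := by
          rw [inner_sum]
          exact Finset.sum_congr rfl fun f _ => (real_inner_smul_right _ _ _).symm
        rw [h4, moment1 q z hq1 hA k, real_inner_smul_right, real_inner_self_eq_norm_sq]
      calc ∑ f : Fin k → I, (∏ t, q (f t)) * (2 * (σ / k) * ⟪A, ∑ t, z (f t)⟫)
          = 2 * (σ / k) * ∑ f : Fin k → I, (∏ t, q (f t)) * ⟪A, ∑ t, z (f t)⟫ := by
            rw [Finset.mul_sum]; exact Finset.sum_congr rfl fun f _ => by ring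
        _ = 2 * (σ / k) * ((k : ℝ) * ‖A‖ ^ 2) := by rw [h3]
    have e3 : ∑ f : Fin k → I, (∏ t, q (f t)) * ((σ / k) ^ 2 * ‖∑ t, z (f t)‖ ^ 2)
        = (σ / k) ^ 2 * ((k : ℝ) * M + (k : ℝ) * ((k : ℝ) - 1) * ‖A‖ ^ 2) := by
      calc ∑ f : Fin k → I, (∏ t, q (f t)) * ((σ / k) ^ 2 * ‖∑ t, z (f t)‖ ^ 2)
          = (σ / k) ^ 2 * ∑ f : Fin k → I, (∏ t, q (f t)) * ‖∑ t, z (f t)‖ ^ 2 := by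
            rw [Finset.mul_sum]; exact Finset.sum_congr rfl fun f _ => by ring
        _ = _ := by rw [moment2 q z hq1 hA k]
    rw [e1, e2, e3]
    field_simp
    ring
  have hB : ∑ f : Fin k → I, (∏ t, q (f t)) * ‖A - (σ / k) • ∑ t, z (f t)‖ ^ 2
      ≤ (1 - σ) ^ 2 * ‖A‖ ^ 2 + σ ^ 2 / k * (a ^ 2 - ‖A‖ ^ 2) := by
    rw [hsum]
    have : σ ^ 2 / k * (M - ‖A‖ ^ 2) ≤ σ ^ 2 / k * (a ^ 2 - ‖A‖ ^ 2) := by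
      apply mul_le_mul_of_nonneg_left (by linarith) (by positivity)
    linarith
  exact exists_le_weighted (fun f => Finset.prod_nonneg fun t _ => hq0 (f t))
    (moment0 q hq1 k) hB

private lemma exists_proj_contract [CompleteSpace F] {K : Set F} (ne : K.Nonempty)
    (hcl : IsClosed K) (h₂ : Convex ℝ K) (u : F) :
    ∃ v ∈ K, ∀ A ∈ K, ‖A - v‖ ≤ ‖A - u‖ := by
  obtain ⟨v, hvK, hmin⟩ := exists_norm_eq_iInf_of_complete_convex ne (hcl.isComplete) h₂ u
  refine ⟨v, hvK, fun A hA => ?_⟩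
  have hinner : ⟪u - v, A - v⟫ ≤ 0 :=
    (norm_eq_iInf_iff_real_inner_le_zero h₂ hvK).1 hmin A hA
  have hexp : ‖A - u‖ ^ 2 = ‖A - v‖ ^ 2 - 2 * ⟪A - v, u - v⟫ + ‖u - v‖ ^ 2 := by
    have : A - u = (A - v) - (u - v) := by abel
    rw [this, norm_sub_sq_real]
  have hsym : ⟪A - v, u - v⟫ ≤ 0 := by rwa [real_inner_comm]
  have hsq : ‖A - v‖ ^ 2 ≤ ‖A - u‖ ^ 2 := by
    rw [hexp]; nlinarith [sq_nonneg ‖u - v‖]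
  nlinarith [norm_nonneg (A - v), norm_nonneg (A - u)]

end AuxMaurey

/-- Frobenius norm of an `n × m` real matrix (given as a function). -/
noncomputable def frobNorm {n m : ℕ} (A : Fin n → Fin m → ℝ) : ℝ :=
  Real.sqrt (∑ k, ∑ i, (A k i) ^ 2)

/-- The class `{Ψ(X) ∈ ℝ^{n×m}}` of data matrices, where
`Ψ(x) = (ψ_1(x),…,ψ_m(x))`, `ψ_i = ∑_j β_{ij} g_{ij}`, and the coefficient
matrix `β` has `‖β‖_r ≤ b`. The `(k,i)` entry of `Ψ(X)` is `ψ_i(x_k)`. -/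
def basisClass {α : Type*} (n m p : ℕ) (g : Fin m → Fin p → α → ℝ)
    (x : Fin n → α) (r b : ℝ) : Set (Fin n → Fin m → ℝ) :=
  {A | ∃ β : Fin m → Fin p → ℝ,
    (∑ i, ∑ j, |β i j| ^ r) ^ (1 / r) ≤ b ∧
    ∀ k i, A k i = ∑ j, β i j * g i j (x k)}

/-- **Covering bound for basis-represented activation layers (Proposition 2).** -/
theorem log_coverNum_basisClass_le {α : Type*} (n m p : ℕ) (hm : 0 < m) (hp : 0 < p)
    (g : Fin m → Fin p → α → ℝ) (x : Fin n → α)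
    (b c r s v : ℝ) (hr : 0 < r) (hs : 0 < s) (hrs : 1 / r + 1 / s = 1)
    (hv0 : 0 < v) (hv2 : v ≤ 2)
    (hG : (∑ i, ∑ j, (∑ k, |g i j (x k)| ^ v) ^ (s / v)) ^ (1 / s) ≤ c)
    (ε : ℝ) (hε : 0 < ε) :
    ∃ V : Finset (Fin n → Fin m → ℝ),
      (∀ A ∈ V, A ∈ basisClass n m p g x r b) ∧
      (∀ A ∈ basisClass n m p g x r b, ∃ A' ∈ V, frobNorm (A - A') ≤ ε) ∧
      Real.log V.card ≤ b ^ 2 * c ^ 2 / ε ^ 2 * Real.log (2 * m * p) := by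
  classical
  have hm1 : (1:ℝ) ≤ m := by exact_mod_cast hm
  have hp1 : (1:ℝ) ≤ p := by exact_mod_cast hp
  have hb2 : (1:ℝ) ≤ 2 * m * p := by nlinarith
  have hRHS0 : 0 ≤ b ^ 2 * c ^ 2 / ε ^ 2 * Real.log (2 * m * p) :=
    mul_nonneg (by positivity) (Real.log_nonneg hb2)
  by_cases hne : (basisClass n m p g x r b).Nonempty
  swap
  · exact ⟨∅, by simp, fun A hA => absurd ⟨A, hA⟩ hne, by simpa using hRHS0⟩
  -- basic positivity facts
  have hb : 0 ≤ b := by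
    obtain ⟨A₀, β₀, hβ₀, -⟩ := hne
    exact le_trans (Real.rpow_nonneg (Finset.sum_nonneg fun i _ =>
      Finset.sum_nonneg fun j _ => Real.rpow_nonneg (abs_nonneg _) r) _) hβ₀
  have hc : 0 ≤ c :=
    le_trans (Real.rpow_nonneg (Finset.sum_nonneg fun i _ => Finset.sum_nonneg fun j _ =>
      Real.rpow_nonneg (Finset.sum_nonneg fun k _ => Real.rpow_nonneg (abs_nonneg _) v) _) _) hG
  have h0K : (0 : Fin n → Fin m → ℝ) ∈ basisClass n m p g x r b := by
    refine ⟨0, ?_, by simp⟩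
    simp only [Pi.zero_apply, abs_zero, Real.zero_rpow (ne_of_gt hr), Finset.sum_const_zero]
    rw [Real.zero_rpow (by positivity : 1/r ≠ 0)]
    exact hb
  have hr1 : 1 < r := by
    have h1s : 0 < 1/s := by positivity
    have : 1/r < 1 := by linarith
    rwa [div_lt_one hr] at this
  have hconj : Real.HolderConjugate r s :=
    ⟨by rw [inv_one, ← one_div, ← one_div]; exact hrs, hr, hs⟩
  -- the euclidean-space embedding
  set le2 := WithLp.linearEquiv 2 ℝ ((Fin n × Fin m) → ℝ) with hle2
  set emb : (Fin n → Fin m → ℝ) → EuclideanSpace ℝ (Fin n × Fin m) :=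
    fun A => le2.symm (fun ki => A ki.1 ki.2) with hembdef
  have hemb_lin : IsLinearMap ℝ emb := by
    constructor
    · intro A B
      rw [hembdef]; simp only
      rw [← map_add]; rfl
    · intro t A
      rw [hembdef]; simp only
      rw [← map_smul]; rfl
  have hnorm : ∀ D : Fin n → Fin m → ℝ, ‖emb D‖ = frobNorm D := by
    intro D
    rw [EuclideanSpace.norm_eq]
    unfold frobNorm
    congr 1
    rw [Fintype.sum_prod_type]
    refine Finset.sum_congr rfl fun k _ => Finset.sum_congr rfl fun i _ => ?_
    rw [Real.norm_eq_abs, sq_abs]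
    rfl
  have hfrob : ∀ A A' : Fin n → Fin m → ℝ, frobNorm (A - A') = ‖emb A - emb A'‖ := by
    intro A A'
    rw [← hemb_lin.map_sub, hnorm]
  -- atoms
  set Mm : Fin m × Fin p → EuclideanSpace ℝ (Fin n × Fin m) :=
    fun ij => le2.symm (fun ki => if ki.2 = ij.1 then g ij.1 ij.2 (x ki.1) else 0) with hMm
  set cc : Fin m × Fin p → ℝ := fun ij => ‖Mm ij‖ with hccdef
  have hcc0 : ∀ ij, 0 ≤ cc ij := fun ij => norm_nonneg _
  have hdec : ∀ (β : Fin m → Fin p → ℝ) (A : Fin n → Fin m → ℝ),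
      (∀ k i, A k i = ∑ j, β i j * g i j (x k)) →
      emb A = ∑ ij : Fin m × Fin p, β ij.1 ij.2 • Mm ij := by
    intro β A hAe
    apply le2.injective
    rw [map_sum]
    simp_rw [map_smul, hMm, hembdef, LinearEquiv.apply_symm_apply]
    funext ki
    rw [Finset.sum_apply]
    simp_rw [Pi.smul_apply, smul_eq_mul]
    rw [Fintype.sum_prod_type]
    have hpull : ∀ i : Fin m, ∑ j, β i j * (if ki.2 = i then g i j (x ki.1) else 0)
        = if ki.2 = i then ∑ j, β i j * g i j (x ki.1) else 0 := by
      intro i; split <;> simp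
    simp_rw [hpull]
    rw [Finset.sum_ite_eq]
    simp [hAe ki.1 ki.2]
  have hccle : ∀ ij : Fin m × Fin p, cc ij ≤ (∑ k, |g ij.1 ij.2 (x k)| ^ v) ^ (1/v) := by
    intro ij
    have hval : cc ij = Real.sqrt (∑ k, (g ij.1 ij.2 (x k)) ^ 2) := by
      rw [hccdef]
      simp only
      rw [EuclideanSpace.norm_eq]
      congr 1
      rw [Fintype.sum_prod_type]
      refine Finset.sum_congr rfl fun k _ => ?_
      have hterm : ∀ i : Fin m, ‖Mm ij (k, i)‖ ^ 2
          = if i = ij.1 then (g ij.1 ij.2 (x k)) ^ 2 else 0 := by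
        intro i
        show ‖(if i = ij.1 then g ij.1 ij.2 (x k) else 0 : ℝ)‖ ^ 2 = _
        split <;> simp [Real.norm_eq_abs, sq_abs]
      simp_rw [hterm]
      rw [Finset.sum_ite_eq']
      simp
    set S := ∑ k, |g ij.1 ij.2 (x k)| ^ v with hS
    have hS0 : 0 ≤ S := Finset.sum_nonneg fun k _ => Real.rpow_nonneg (abs_nonneg _) v
    set T := S ^ (1/v) with hT
    have hT0 : 0 ≤ T := Real.rpow_nonneg hS0 _
    have hTv : T ^ v = S := by
      rw [hT, one_div, Real.rpow_inv_rpow hS0 (ne_of_gt hv0)]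
    rw [hval, show T = Real.sqrt (T ^ 2) from (Real.sqrt_sq hT0).symm]
    apply Real.sqrt_le_sqrt
    -- ∑ k, g² ≤ T²
    by_cases hTzero : T = 0
    · have hSz : S = 0 := by
        rw [← hTv, hTzero, Real.zero_rpow (ne_of_gt hv0)]
      have hterm0 : ∀ k ∈ Finset.univ, |g ij.1 ij.2 (x k)| ^ v = 0 := by
        rw [← Finset.sum_eq_zero_iff_of_nonneg
          (fun k _ => Real.rpow_nonneg (abs_nonneg _) v)]
        exact hSz
      have : ∀ k : Fin n, (g ij.1 ij.2 (x k)) ^ 2 = 0 := by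
        intro k
        have h0 := hterm0 k (Finset.mem_univ k)
        have : |g ij.1 ij.2 (x k)| = 0 := by
          by_contra hne0
          have habs : 0 < |g ij.1 ij.2 (x k)| := lt_of_le_of_ne (abs_nonneg _) (Ne.symm hne0)
          exact absurd h0 (ne_of_gt (Real.rpow_pos_of_pos habs v))
        rw [← sq_abs, this]; ring
      simp only [this, Finset.sum_const_zero]
      positivity
    have hTpos : 0 < T := lt_of_le_of_ne hT0 (Ne.symm hTzero)
    have hkey : ∀ k : Fin n, (g ij.1 ij.2 (x k)) ^ 2 ≤ T ^ 2 * (|g ij.1 ij.2 (x k)| / T) ^ v := by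
      intro k
      set y := |g ij.1 ij.2 (x k)| with hy
      have hy0 : 0 ≤ y := abs_nonneg _
      have hyT : y ≤ T := by
        have h1 : y ^ v ≤ S := by
          rw [hS, hy]
          exact Finset.single_le_sum (f := fun k' => |g ij.1 ij.2 (x k')| ^ v)
            (fun k' _ => Real.rpow_nonneg (abs_nonneg _) v) (Finset.mem_univ k)
        calc y = (y ^ v) ^ (1/v) := by
              rw [one_div, Real.rpow_rpow_inv hy0 (ne_of_gt hv0)]
          _ ≤ S ^ (1/v) := Real.rpow_le_rpow (Real.rpow_nonneg hy0 v) h1 (by positivity)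
          _ = T := rfl
      by_cases hyz : y = 0
      · rw [← sq_abs, ← hy, hyz]
        simp [Real.zero_rpow (ne_of_gt hv0)]
      have hypos : 0 < y := lt_of_le_of_ne hy0 (Ne.symm hyz)
      have hx1 : y / T ≤ 1 := (div_le_one hTpos).2 hyT
      have hxpos : 0 < y / T := div_pos hypos hTpos
      have h2v : (y / T) ^ (2:ℝ) ≤ (y / T) ^ v :=
        Real.rpow_le_rpow_of_exponent_ge hxpos hx1 hv2
      have h2 : (y / T) ^ (2:ℝ) = (y / T) ^ (2:ℕ) := by
        rw [← Real.rpow_natCast (y / T) 2]; norm_num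
      calc (g ij.1 ij.2 (x k)) ^ 2 = y ^ 2 := by rw [hy, sq_abs]
        _ = T ^ 2 * (y / T) ^ (2:ℕ) := by field_simp
        _ = T ^ 2 * (y / T) ^ (2:ℝ) := by rw [h2]
        _ ≤ T ^ 2 * (y / T) ^ v := by
            apply mul_le_mul_of_nonneg_left h2v (by positivity)
    calc ∑ k, (g ij.1 ij.2 (x k)) ^ 2
        ≤ ∑ k, T ^ 2 * (|g ij.1 ij.2 (x k)| / T) ^ v :=
          Finset.sum_le_sum fun k _ => hkey k
      _ = T ^ 2 := by
          have hdr : ∀ k : Fin n, (|g ij.1 ij.2 (x k)| / T) ^ v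
              = |g ij.1 ij.2 (x k)| ^ v / T ^ v :=
            fun k => Real.div_rpow (abs_nonneg _) hT0 v
          simp_rw [hdr]
          rw [← Finset.mul_sum, ← Finset.sum_div, ← hS, hTv]
          have hSpos : 0 < S := by rw [← hTv]; exact Real.rpow_pos_of_pos hTpos v
          rw [div_self (ne_of_gt hSpos), mul_one]
  have hCs : (∑ ij : Fin m × Fin p, cc ij ^ s) ^ (1/s) ≤ c := by
    have h1 : ∑ ij : Fin m × Fin p, cc ij ^ s
        ≤ ∑ ij : Fin m × Fin p, (∑ k, |g ij.1 ij.2 (x k)| ^ v) ^ (s/v) := by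
      refine Finset.sum_le_sum fun ij _ => ?_
      have hS0 : 0 ≤ ∑ k, |g ij.1 ij.2 (x k)| ^ v :=
        Finset.sum_nonneg fun k _ => Real.rpow_nonneg (abs_nonneg _) v
      calc cc ij ^ s ≤ ((∑ k, |g ij.1 ij.2 (x k)| ^ v) ^ (1/v)) ^ s :=
            Real.rpow_le_rpow (hcc0 ij) (hccle ij) hs.le
        _ = (∑ k, |g ij.1 ij.2 (x k)| ^ v) ^ (s/v) := by
            rw [← Real.rpow_mul hS0, one_div_mul_eq_div]
    calc (∑ ij : Fin m × Fin p, cc ij ^ s) ^ (1/s)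
        ≤ (∑ ij : Fin m × Fin p, (∑ k, |g ij.1 ij.2 (x k)| ^ v) ^ (s/v)) ^ (1/s) :=
          Real.rpow_le_rpow (Finset.sum_nonneg fun ij _ =>
            Real.rpow_nonneg (hcc0 ij) s) h1 (by positivity)
      _ ≤ c := by rw [Fintype.sum_prod_type]; exact hG
  have hHolder : ∀ β : Fin m → Fin p → ℝ, (∑ i, ∑ j, |β i j| ^ r) ^ (1/r) ≤ b →
      ∑ ij : Fin m × Fin p, |β ij.1 ij.2| * cc ij ≤ b * c := by
    intro β hβ
    have h := Real.inner_le_Lp_mul_Lq_of_nonneg (Finset.univ)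
      (f := fun ij : Fin m × Fin p => |β ij.1 ij.2|) (g := cc) hconj
      (fun i _ => abs_nonneg _) (fun i _ => hcc0 i)
    have hβ' : (∑ ij : Fin m × Fin p, |β ij.1 ij.2| ^ r) ^ (1/r) ≤ b := by
      rw [Fintype.sum_prod_type]; exact hβ
    calc ∑ ij : Fin m × Fin p, |β ij.1 ij.2| * cc ij
        ≤ (∑ ij : Fin m × Fin p, |β ij.1 ij.2| ^ r) ^ (1/r)
          * (∑ ij : Fin m × Fin p, cc ij ^ s) ^ (1/s) := h
      _ ≤ b * c := by
          apply mul_le_mul hβ' hCs (Real.rpow_nonneg (Finset.sum_nonneg fun ij _ =>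
            Real.rpow_nonneg (hcc0 ij) s) _) hb
  have hnormb : ∀ A ∈ basisClass n m p g x r b, ‖emb A‖ ≤ b * c := by
    intro A hA
    obtain ⟨β, hβ, hAe⟩ := hA
    rw [hdec β A hAe]
    calc ‖∑ ij : Fin m × Fin p, β ij.1 ij.2 • Mm ij‖
        ≤ ∑ ij : Fin m × Fin p, ‖β ij.1 ij.2 • Mm ij‖ := norm_sum_le _ _
      _ = ∑ ij : Fin m × Fin p, |β ij.1 ij.2| * cc ij := by
          refine Finset.sum_congr rfl fun ij _ => ?_
          rw [norm_smul, Real.norm_eq_abs, hccdef]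
      _ ≤ b * c := hHolder β hβ
  by_cases hεa : b * c ≤ ε
  · -- trivial one-point cover
    refine ⟨{0}, by simpa using h0K, fun A hA => ⟨0, Finset.mem_singleton_self _, ?_⟩, ?_⟩
    · rw [hfrob A 0, hemb_lin.map_zero, sub_zero]
      exact le_trans (hnormb A hA) hεa
    · simpa using hRHS0
  push_neg at hεa
  set a := b * c with ha
  have ha0 : 0 < a := lt_trans hε hεa
  have hc0 : 0 < c := by nlinarith
  have hb0 : 0 < b := by nlinarith
  set kk : ℕ := max 1 ⌈((a - ε)/ε)^2⌉₊ with hkk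
  have hkk0 : 0 < kk := lt_of_lt_of_le Nat.one_pos (le_max_left _ _)
  have hkx : ((a - ε)/ε)^2 ≤ (kk : ℝ) := by
    refine le_trans (Nat.le_ceil _) ?_
    exact_mod_cast Nat.le_max_right 1 _
  have hkt : (kk : ℝ) ≤ a^2/ε^2 := by
    have h1 : (1:ℝ) ≤ a^2/ε^2 := by
      rw [le_div_iff₀ (by positivity)]; nlinarith
    have h2 : ((⌈((a - ε)/ε)^2⌉₊ : ℕ) : ℝ) ≤ a^2/ε^2 := by
      have h3 : ((⌈((a - ε)/ε)^2⌉₊ : ℕ) : ℝ) < ((a - ε)/ε)^2 + 1 :=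
        Nat.ceil_lt_add_one (by positivity)
      have h4 : ((a - ε)/ε)^2 + 1 ≤ a^2/ε^2 := by
        have expand : a^2/ε^2 - (((a - ε)/ε)^2 + 1) = (2*a*ε - 2*ε^2)/ε^2 := by
          field_simp
          ring
        have h9 : (0:ℝ) ≤ (2*a*ε - 2*ε^2)/ε^2 :=
          div_nonneg (by nlinarith [mul_pos (sub_pos.2 hεa) hε]) (by positivity)
        linarith
      linarith
    rw [hkk, Nat.cast_max, Nat.cast_one]
    exact max_le h1 h2
  set σs : ℝ := (a - ε)/a with hσs
  -- atoms
  set uu : Fin m × Fin p → EuclideanSpace ℝ (Fin n × Fin m) :=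
    fun ij => if cc ij = 0 then 0 else (cc ij)⁻¹ • Mm ij with huu
  have huu1 : ∀ ij, ‖uu ij‖ ≤ 1 := by
    intro ij
    rw [huu]; simp only
    split
    · simp
    · rename_i h0
      rw [norm_smul, Real.norm_eq_abs, abs_inv, abs_of_nonneg (hcc0 ij)]
      rw [show ‖Mm ij‖ = cc ij from rfl, inv_mul_cancel₀ h0]
  have hcu : ∀ ij, cc ij • uu ij = Mm ij := by
    intro ij
    rw [huu]; simp only
    split
    · rename_i h0
      rw [h0, zero_smul]
      exact (norm_eq_zero.1 h0).symm
    · rename_i h0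
      rw [smul_smul, mul_inv_cancel₀ h0, one_smul]
  set zz : Bool × (Fin m × Fin p) → EuclideanSpace ℝ (Fin n × Fin m) :=
    fun bi => (if bi.1 then a else -a) • uu bi.2 with hzz
  have hzza : ∀ bi, ‖zz bi‖^2 ≤ a^2 := by
    intro bi
    rw [hzz]; simp only
    rw [norm_smul, Real.norm_eq_abs]
    have habs : |if bi.1 then a else -a| = a := by
      split
      · exact abs_of_pos ha0
      · rw [abs_neg]; exact abs_of_pos ha0
    rw [habs, mul_pow]
    calc a^2 * ‖uu bi.2‖^2 ≤ a^2 * 1 := by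
          apply mul_le_mul_of_nonneg_left _ (by positivity)
          calc ‖uu bi.2‖^2 ≤ 1^2 := pow_le_pow_left₀ (norm_nonneg _) (huu1 bi.2) 2
            _ = 1 := one_pow 2
      _ = a^2 := mul_one _
  -- convexity of the class
  have hKconv : Convex ℝ (basisClass n m p g x r b) := by
    intro A1 hA1 A2 hA2 θ1 θ2 hθ1 hθ2 hθ
    obtain ⟨β1, hβ1, hA1e⟩ := hA1
    obtain ⟨β2, hβ2, hA2e⟩ := hA2
    refine ⟨fun i j => θ1 * β1 i j + θ2 * β2 i j, ?_, ?_⟩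
    · have hscale : ∀ (θ : ℝ), 0 ≤ θ → ∀ γ : Fin m → Fin p → ℝ,
          (∑ ij : Fin m × Fin p, |θ * γ ij.1 ij.2| ^ r) ^ (1/r)
            = θ * (∑ ij : Fin m × Fin p, |γ ij.1 ij.2| ^ r) ^ (1/r) := by
        intro θ hθ0 γ
        have hterm : ∀ ij : Fin m × Fin p, |θ * γ ij.1 ij.2| ^ r = θ ^ r * |γ ij.1 ij.2| ^ r := by
          intro ij
          rw [abs_mul, abs_of_nonneg hθ0, Real.mul_rpow hθ0 (abs_nonneg _)]
        simp_rw [hterm]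
        rw [← Finset.mul_sum, Real.mul_rpow (Real.rpow_nonneg hθ0 r)
          (Finset.sum_nonneg fun ij _ => Real.rpow_nonneg (abs_nonneg _) r),
          one_div, Real.rpow_rpow_inv hθ0 (ne_of_gt hr)]
      have hflat : ∀ γ : Fin m → Fin p → ℝ,
          (∑ i, ∑ j, |γ i j| ^ r) = ∑ ij : Fin m × Fin p, |γ ij.1 ij.2| ^ r := by
        intro γ
        rw [Fintype.sum_prod_type]
      have hmink := Real.Lp_add_le Finset.univ
        (fun ij : Fin m × Fin p => θ1 * β1 ij.1 ij.2)
        (fun ij : Fin m × Fin p => θ2 * β2 ij.1 ij.2) hr1.le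
      calc (∑ i, ∑ j, |θ1 * β1 i j + θ2 * β2 i j| ^ r) ^ (1/r)
          = (∑ ij : Fin m × Fin p, |θ1 * β1 ij.1 ij.2 + θ2 * β2 ij.1 ij.2| ^ r) ^ (1/r) := by
            rw [hflat (fun i j => θ1 * β1 i j + θ2 * β2 i j)]
        _ ≤ (∑ ij : Fin m × Fin p, |θ1 * β1 ij.1 ij.2| ^ r) ^ (1/r)
            + (∑ ij : Fin m × Fin p, |θ2 * β2 ij.1 ij.2| ^ r) ^ (1/r) := hmink
        _ = θ1 * (∑ ij : Fin m × Fin p, |β1 ij.1 ij.2| ^ r) ^ (1/r)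
            + θ2 * (∑ ij : Fin m × Fin p, |β2 ij.1 ij.2| ^ r) ^ (1/r) := by
            rw [hscale θ1 hθ1 β1, hscale θ2 hθ2 β2]
        _ ≤ θ1 * b + θ2 * b := by
            apply add_le_add
            · apply mul_le_mul_of_nonneg_left _ hθ1
              rw [← hflat β1]; exact hβ1
            · apply mul_le_mul_of_nonneg_left _ hθ2
              rw [← hflat β2]; exact hβ2
        _ = b := by rw [← add_mul, hθ, one_mul]
    · intro k i
      simp only [Pi.add_apply, Pi.smul_apply, smul_eq_mul]
      rw [hA1e k i, hA2e k i, Finset.mul_sum, Finset.mul_sum, ← Finset.sum_add_distrib]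
      exact Finset.sum_congr rfl fun j _ => by ring
  -- compactness of the class
  have hKcomp : IsCompact (basisClass n m p g x r b) := by
    have hEq : basisClass n m p g x r b =
        (fun β : Fin m → Fin p → ℝ => fun k i => ∑ j, β i j * g i j (x k)) ''
          {β : Fin m → Fin p → ℝ | (∑ i, ∑ j, |β i j| ^ r) ^ (1/r) ≤ b} := by
      ext A
      constructor
      · rintro ⟨β, hβ, hAe⟩
        exact ⟨β, hβ, by funext k i; exact (hAe k i).symm⟩
      · rintro ⟨β, hβ, rfl⟩
        exact ⟨β, hβ, fun k i => rfl⟩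
    rw [hEq]
    apply IsCompact.image
    · apply Metric.isCompact_of_isClosed_isBounded
      · have hpre : {β : Fin m → Fin p → ℝ | (∑ i, ∑ j, |β i j| ^ r) ^ (1/r) ≤ b}
            = (fun β : Fin m → Fin p → ℝ => (∑ i, ∑ j, |β i j| ^ r) ^ (1/r)) ⁻¹' (Set.Iic b) :=
          rfl
        rw [hpre]
        apply IsClosed.preimage _ isClosed_Iic
        apply Continuous.rpow_const
        · apply continuous_finset_sum; intro i _
          apply continuous_finset_sum; intro j _
          apply Continuous.rpow_const
          · exact ((continuous_apply j).comp (continuous_apply i)).abs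
          · intro _; right; exact hr.le
        · intro _; right; positivity
      · rw [isBounded_iff_forall_norm_le]
        refine ⟨b, fun β hβ => ?_⟩
        rw [pi_norm_le_iff_of_nonneg hb]; intro i
        rw [pi_norm_le_iff_of_nonneg hb]; intro j
        rw [Real.norm_eq_abs]
        have h1 : |β i j| ^ r ≤ ∑ i, ∑ j, |β i j| ^ r := by
          calc |β i j| ^ r ≤ ∑ j', |β i j'| ^ r :=
              Finset.single_le_sum (f := fun j' => |β i j'| ^ r)
                (fun j' _ => Real.rpow_nonneg (abs_nonneg _) r) (Finset.mem_univ j)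
            _ ≤ ∑ i', ∑ j', |β i' j'| ^ r :=
              Finset.single_le_sum (f := fun i' => ∑ j', |β i' j'| ^ r)
                (fun i' _ => Finset.sum_nonneg fun j' _ => Real.rpow_nonneg (abs_nonneg _) r)
                (Finset.mem_univ i)
        calc |β i j| = (|β i j| ^ r) ^ (1/r) := by
              rw [one_div, Real.rpow_rpow_inv (abs_nonneg _) (ne_of_gt hr)]
          _ ≤ (∑ i, ∑ j, |β i j| ^ r) ^ (1/r) :=
              Real.rpow_le_rpow (Real.rpow_nonneg (abs_nonneg _) r) h1 (by positivity)
          _ ≤ b := hβ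
    · apply continuous_pi; intro k
      apply continuous_pi; intro i
      apply continuous_finset_sum; intro j _
      exact (continuous_apply_apply i j).mul continuous_const
  have hembcont : Continuous emb := by
    rw [hembdef]
    exact le2.symm.toLinearMap.continuous_of_finiteDimensional.comp
      (continuous_pi fun ki => (continuous_apply ki.2).comp (continuous_apply ki.1))
  have hK'cl : IsClosed (emb '' basisClass n m p g x r b) :=
    (hKcomp.image hembcont).isClosed
  have hK'conv : Convex ℝ (emb '' basisClass n m p g x r b) :=
    hKconv.is_linear_image hemb_lin
  have hK'ne : (emb '' basisClass n m p g x r b).Nonempty := ⟨emb 0, 0, h0K, rfl⟩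
  have hproj : ∀ y : EuclideanSpace ℝ (Fin n × Fin m),
      ∃ Av, Av ∈ basisClass n m p g x r b ∧
        ∀ A ∈ basisClass n m p g x r b, ‖emb A - emb Av‖ ≤ ‖emb A - y‖ := by
    intro y
    obtain ⟨w, hwK, hwprop⟩ := exists_proj_contract hK'ne hK'cl hK'conv y
    obtain ⟨Av, hAv, rfl⟩ := hwK
    exact ⟨Av, hAv, fun A hA => hwprop (emb A) ⟨A, hA, rfl⟩⟩
  choose pick pickmem pickprop using hproj
  set i₀ : Fin m × Fin p := (⟨0, hm⟩, ⟨0, hp⟩) with hi₀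
  set Yc : (Fin kk → Bool × (Fin m × Fin p)) → (Fin n → Fin m → ℝ) :=
    fun f => pick ((σs / kk) • ∑ t, zz (f t)) with hYc
  refine ⟨Finset.image Yc Finset.univ, ?_, ?_, ?_⟩
  · intro A hA
    obtain ⟨f, -, rfl⟩ := Finset.mem_image.1 hA
    exact pickmem _
  · intro A hA
    have hAK : A ∈ basisClass n m p g x r b := hA
    obtain ⟨β, hβ, hAe⟩ := hA
    set bt : Fin m × Fin p → ℝ := fun ij => β ij.1 ij.2 * cc ij / a with hbt
    have hbt1 : ∑ ij, |bt ij| ≤ 1 := by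
      have habs : ∀ ij, |bt ij| = |β ij.1 ij.2| * cc ij / a := by
        intro ij
        rw [hbt]; simp only
        rw [abs_div, abs_mul, abs_of_nonneg (hcc0 ij), abs_of_pos ha0]
      simp_rw [habs]
      rw [← Finset.sum_div, div_le_one ha0]
      exact hHolder β hβ
    set ll : ℝ := 1 - ∑ ij, |bt ij| with hll
    have hll0 : 0 ≤ ll := by rw [hll]; linarith
    set qq : Bool × (Fin m × Fin p) → ℝ := fun bi =>
      (cond bi.1 (max (bt bi.2) 0) (max (-(bt bi.2)) 0)) +
        (if bi.2 = i₀ then ll/2 else 0) with hqq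
    have hqt : ∀ ij, qq (true, ij) = max (bt ij) 0 + (if ij = i₀ then ll/2 else 0) := by
      intro ij; rw [hqq]; rfl
    have hqf : ∀ ij, qq (false, ij) = max (-(bt ij)) 0 + (if ij = i₀ then ll/2 else 0) := by
      intro ij; rw [hqq]; rfl
    have hq0 : ∀ bi, 0 ≤ qq bi := by
      rintro ⟨bb, ij⟩
      have hll2 : 0 ≤ (if ij = i₀ then ll/2 else 0) := by
        split
        · exact div_nonneg hll0 (by norm_num)
        · exact le_refl 0
      cases bb
      · rw [hqf]
        exact add_nonneg (le_max_right _ _) hll2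
      · rw [hqt]
        exact add_nonneg (le_max_right _ _) hll2
    have hq1 : ∑ bi, qq bi = 1 := by
      rw [Fintype.sum_prod_type, Fintype.sum_bool, ← Finset.sum_add_distrib]
      have hpoint : ∀ ij : Fin m × Fin p, qq (true, ij) + qq (false, ij)
          = |bt ij| + (if ij = i₀ then ll else 0) := by
        intro ij
        rw [hqt, hqf]
        by_cases hij : ij = i₀
        · rw [if_pos hij, if_pos hij,
            ← max_zero_add_max_neg_zero_eq_abs_self (bt ij)]
          ring
        · rw [if_neg hij, if_neg hij,
            ← max_zero_add_max_neg_zero_eq_abs_self (bt ij)]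
          ring
      simp_rw [hpoint]
      rw [Finset.sum_add_distrib, Finset.sum_ite_eq' Finset.univ i₀ (fun _ => ll)]
      simp only [Finset.mem_univ, if_true]
      rw [hll]; ring
    have hqz : ∑ bi, qq bi • zz bi = emb A := by
      rw [Fintype.sum_prod_type, Fintype.sum_bool, ← Finset.sum_add_distrib]
      have hzt : ∀ ij, zz (true, ij) = a • uu ij := by intro ij; rw [hzz]; rfl
      have hzf : ∀ ij, zz (false, ij) = (-a) • uu ij := by intro ij; rw [hzz]; rfl
      have hpoint : ∀ ij, qq (true, ij) • zz (true, ij) + qq (false, ij) • zz (false, ij)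
          = β ij.1 ij.2 • Mm ij := by
        intro ij
        rw [hqt, hqf, hzt, hzf]
        rw [smul_smul, smul_smul, ← add_smul]
        have hmax : max (bt ij) 0 - max (-(bt ij)) 0 = bt ij :=
          max_zero_sub_max_neg_zero_eq_self _
        have hcoef : (max (bt ij) 0 + (if ij = i₀ then ll/2 else 0)) * a
            + (max (-(bt ij)) 0 + (if ij = i₀ then ll/2 else 0)) * (-a)
            = β ij.1 ij.2 * cc ij := by
          have hba : bt ij * a = β ij.1 ij.2 * cc ij := by
            rw [hbt]; simp only; field_simp
          calc (max (bt ij) 0 + (if ij = i₀ then ll/2 else 0)) * a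
              + (max (-(bt ij)) 0 + (if ij = i₀ then ll/2 else 0)) * (-a)
              = (max (bt ij) 0 - max (-(bt ij)) 0) * a := by ring
            _ = bt ij * a := by rw [hmax]
            _ = β ij.1 ij.2 * cc ij := hba
        rw [hcoef, ← smul_smul, hcu ij]
      simp_rw [hpoint]
      exact (hdec β A hAe).symm
    have hwle : ‖emb A‖^2 ≤ a^2 := by
      have h6 := hnormb A hAK
      nlinarith [norm_nonneg (emb A)]
    obtain ⟨f, hf⟩ := maurey qq zz hq0 hq1 hzza hqz kk hkk0 σs
    have hεsq : ‖emb A - (σs / kk) • ∑ t, zz (f t)‖^2 ≤ ε^2 := by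
      have h1σ : 1 - σs = ε / a := by rw [hσs]; field_simp; ring
      have hσk : σs^2 / kk ≤ ε^2 / a^2 := by
        rw [hσs, div_pow, div_div, div_le_div_iff₀ (by positivity) (by positivity)]
        have h5 : (a - ε)^2 ≤ (kk:ℝ) * ε^2 := by
          have h7 := hkx
          rw [div_pow, div_le_iff₀ (by positivity : (0:ℝ) < ε^2)] at h7
          linarith
        nlinarith
      calc ‖emb A - (σs / kk) • ∑ t, zz (f t)‖^2
          ≤ (1 - σs)^2 * ‖emb A‖^2 + σs^2 / kk * (a^2 - ‖emb A‖^2) := hf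
        _ ≤ (ε/a)^2 * ‖emb A‖^2 + (ε^2/a^2) * (a^2 - ‖emb A‖^2) := by
            rw [h1σ]
            have h8 : σs^2/kk * (a^2 - ‖emb A‖^2) ≤ ε^2/a^2 * (a^2 - ‖emb A‖^2) :=
              mul_le_mul_of_nonneg_right hσk (by linarith)
            linarith
        _ = ε^2 := by field_simp; ring
    have hcov : ‖emb A - (σs / kk) • ∑ t, zz (f t)‖ ≤ ε := by
      have h10 := Real.sqrt_le_sqrt hεsq
      rwa [Real.sqrt_sq (norm_nonneg _), Real.sqrt_sq hε.le] at h10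
    refine ⟨Yc f, Finset.mem_image.2 ⟨f, Finset.mem_univ f, rfl⟩, ?_⟩
    rw [hYc, hfrob]
    exact le_trans (pickprop _ A hAK) hcov
  · -- cardinality bound
    have hcard : (Finset.image Yc Finset.univ).card ≤ (2 * m * p) ^ kk := by
      calc (Finset.image Yc Finset.univ).card
          ≤ (Finset.univ : Finset (Fin kk → Bool × (Fin m × Fin p))).card :=
            Finset.card_image_le
        _ = (2 * m * p) ^ kk := by
            rw [Finset.card_univ, Fintype.card_fun, Fintype.card_prod, Fintype.card_prod,
              Fintype.card_bool, Fintype.card_fin, Fintype.card_fin, Fintype.card_fin]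
            ring
    have hVpos : 0 < (Finset.image Yc Finset.univ).card := by
      apply Finset.card_pos.2
      exact ⟨_, Finset.mem_image.2 ⟨fun _ => (true, i₀), Finset.mem_univ _, rfl⟩⟩
    have hNpos : (0:ℝ) < ((2 * m * p) ^ kk : ℕ) := by
      have : 0 < (2 * m * p) ^ kk := Nat.pow_pos (by positivity)
      exact_mod_cast this
    calc Real.log (Finset.image Yc Finset.univ).card
        ≤ Real.log (((2 * m * p) ^ kk : ℕ) : ℝ) := by
          rw [Real.log_le_log_iff (by exact_mod_cast hVpos) hNpos]
          exact_mod_cast hcard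
      _ = (kk : ℝ) * Real.log (2 * m * p) := by
          push_cast
          rw [Real.log_pow]
      _ ≤ a^2/ε^2 * Real.log (2 * m * p) :=
          mul_le_mul_of_nonneg_right hkt (Real.log_nonneg hb2)
      _ = b ^ 2 * c ^ 2 / ε ^ 2 * Real.log (2 * m * p) := by rw [ha]; ring_nf
end

section
/- Given positive reals $B_i, c_i, \rho_i$ for $1 \leq i \leq L$ and $D > 0$, define $\alpha_i = (B_i c_i D \prod_{j=1}^L \rho_j)^{2/3}$ and $\tilde{\alpha} = \sum_{i=1}^L \alpha_i$. Suppose for each $i$ and every $\epsilon_i > 0$ the $i$-th layer class admits covering bound $\log N_i(\epsilon_i) \leq \frac{B_i^2 c_i^2 D^2 (\prod_{k=1}^i \rho_k)^2}{\epsilon_i^2} K$ for a constant $K > 0$, and the composed class satisfies $\log \mathcal{N}(\mathcal{H}, \sum_{i=1}^L (\prod_{j=i+1}^L \rho_j)\epsilon_i) \leq \sum_{i=1}^L \log N_i(\epsilon_i)$. Then choosing $\epsilon_i = \frac{\alpha_i \epsilon}{\tilde{\alpha} \prod_{j=i+1}^L \rho_j}$ yields $\log \mathcal{N}(\mathcal{H},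 \epsilon) \leq \frac{\tilde{\alpha}^3 K}{\epsilon^2}$ for all $\epsilon > 0$. -/
open Finset

/-- **Resolution-allocation step in the proof of Theorem 1.** Layers are indexed
by `i = 0, …, L-1` (layer `i` here is layer `i+1` of the paper).  `lN i ε` is the
log covering number of layer `i` at resolution `ε` and `H ε` is the log covering
number of the composed class at resolution `ε`.  Allocating
`ε_i = α_i ε/(α̃ ∏_{j>i} ρ_j)` with `α_i = (B_i c_i D ∏_{j=1}^L ρ_j)^{2/3}` and
`α̃ = ∑ α_i` yields `H(ε) ≤ α̃³ K/ε²`. -/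
theorem cover_allocation_bound (L : ℕ) (hL : 0 < L) (B c ρ : ℕ → ℝ) (D K : ℝ)
    (hB : ∀ i, 0 < B i) (hc : ∀ i, 0 < c i) (hρ : ∀ i, 0 < ρ i)
    (hD : 0 < D) (hK : 0 < K)
    (lN : ℕ → ℝ → ℝ) (H : ℝ → ℝ)
    (h1 : ∀ i < L, ∀ εi : ℝ, 0 < εi →
      lN i εi ≤ (B i) ^ 2 * (c i) ^ 2 * D ^ 2
        * (∏ k ∈ Finset.range (i + 1), ρ k) ^ 2 / εi ^ 2 * K)
    (h2 : ∀ εv : ℕ → ℝ, (∀ i, 0 < εv i) →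
      H (∑ i ∈ Finset.range L, (∏ j ∈ Finset.Ico (i + 1) L, ρ j) * εv i)
        ≤ ∑ i ∈ Finset.range L, lN i (εv i))
    (ε : ℝ) (hε : 0 < ε) :
    H ε ≤ (∑ i ∈ Finset.range L,
        (B i * c i * D * ∏ j ∈ Finset.range L, ρ j) ^ ((2 : ℝ) / 3)) ^ 3
      * K / ε ^ 2 := by
  set P : ℝ := ∏ j ∈ Finset.range L, ρ j with hPdef
  have hPpos : 0 < P := Finset.prod_pos (fun j _ => hρ j)
  set b : ℕ → ℝ := fun i => B i * c i * D * P with hbdef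
  have hb : ∀ i, 0 < b i := fun i =>
    mul_pos (mul_pos (mul_pos (hB i) (hc i)) hD) hPpos
  set α : ℕ → ℝ := fun i => (b i) ^ ((2 : ℝ) / 3) with hαdef
  have hα : ∀ i, 0 < α i := fun i => Real.rpow_pos_of_pos (hb i) _
  set A : ℝ := ∑ i ∈ Finset.range L, α i with hAdef
  have hApos : 0 < A :=
    Finset.sum_pos (fun i _ => hα i) (Finset.nonempty_range_iff.2 hL.ne')
  set Q : ℕ → ℝ := fun i => ∏ j ∈ Finset.Ico (i + 1) L, ρ j with hQdef
  have hQ : ∀ i, 0 < Q i := fun i => Finset.prod_pos (fun j _ => hρ j)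
  set εv : ℕ → ℝ := fun i => α i * ε / (A * Q i) with hεvdef
  have hεv : ∀ i, 0 < εv i := fun i =>
    div_pos (mul_pos (hα i) hε) (mul_pos hApos (hQ i))
  have hsum : ∑ i ∈ Finset.range L, Q i * εv i = ε := by
    have e1 : ∀ i ∈ Finset.range L, Q i * εv i = α i * (ε / A) := by
      intro i _
      have := (hQ i).ne'
      field_simp [hεvdef]
      rw [show εv i = α i * ε / (A * Q i) from rfl, mul_div_assoc', div_mul_eq_mul_div,
        div_eq_iff (mul_ne_zero hApos.ne' this)]
      ring
    rw [Finset.sum_congr rfl e1, ← Finset.sum_mul, ← hAdef]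
    field_simp
  have key : ∀ i ∈ Finset.range L, lN i (εv i) ≤ α i * A ^ 2 * K / ε ^ 2 := by
    intro i hi
    have hiL : i < L := Finset.mem_range.1 hi
    have hPi : (∏ k ∈ Finset.range (i + 1), ρ k) * Q i = P := by
      rw [hQdef, hPdef]
      exact Finset.prod_range_mul_prod_Ico ρ hiL
    refine (h1 i hiL (εv i) (hεv i)).trans (le_of_eq ?_)
    have hεvval : εv i = α i * ε / (A * Q i) := rfl
    have hne : (∏ k ∈ Finset.range (i + 1), ρ k) ≠ 0 :=
      (Finset.prod_pos (fun j _ => hρ j)).ne'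
    have hbi : b i = B i * c i * D * ((∏ k ∈ Finset.range (i + 1), ρ k) * Q i) := by
      rw [hPi]
    have hαi3 : α i ^ 3 = b i ^ 2 := by
      rw [hαdef]
      rw [← Real.rpow_natCast ((b i) ^ ((2:ℝ)/3)) 3, ← Real.rpow_mul (hb i).le,
        ← Real.rpow_natCast (b i) 2]
      norm_num
    -- goal: B^2 c^2 D^2 Pi^2 / εv^2 * K = α A^2 K / ε^2
    have h2' : (B i) ^ 2 * (c i) ^ 2 * D ^ 2
        * (∏ k ∈ Finset.range (i + 1), ρ k) ^ 2 / εv i ^ 2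
        = b i ^ 2 * A ^ 2 / (α i ^ 2 * ε ^ 2) := by
      rw [hεvval, hbi]
      field_simp
    rw [h2']
    have hbα : b i ^ 2 / α i ^ 2 = α i := by
      rw [← hαi3]
      field_simp [pow_succ, (hα i).ne']
    have : b i ^ 2 * A ^ 2 / (α i ^ 2 * ε ^ 2) * K
        = (b i ^ 2 / α i ^ 2) * A ^ 2 * K / ε ^ 2 := by ring
    rw [this, hbα]
  have hH := h2 εv hεv
  rw [show (∑ i ∈ Finset.range L, (∏ j ∈ Finset.Ico (i + 1) L, ρ j) * εv i) = ε from hsum] at hH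
  refine hH.trans ?_
  calc ∑ i ∈ Finset.range L, lN i (εv i)
      ≤ ∑ i ∈ Finset.range L, α i * A ^ 2 * K / ε ^ 2 := Finset.sum_le_sum key
    _ = A ^ 3 * K / ε ^ 2 := by
        rw [← Finset.sum_div, ← Finset.sum_mul, ← Finset.sum_mul, ← hAdef]
        ring
end
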